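/- Every element of L^{i,i+1} — a D×D matrix of determinant 1 differing from the identity only in rows i and i+1 — can be factored as T^i_1 T^{i+1}_1 T^i_2 T^{i+1}_2 where T^i_m ∈ L^i and T^{i+1}_m ∈ L^{i+1} (single-row modification matrices). -/

import Mathlib

open Matrix

/-- `RowMod D k M` : `M` agrees with the identity in every row except possibly
row `k`, and its `(k,k)` entry equals 1 (so `M ∈ L^k`, and det M = 1). -/
def RowMod (D : ℕ) (k : Fin D) (M : Matrix (Fin D) (Fin D) ℝ) : Prop :=
  M k k = 1 ∧ ∀ r c : Fin D, r ≠ k → M r c = (1 : Matrix (Fin D) (Fin D) ℝ) r c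

lemma rowMod_det {D : ℕ} {k : Fin D} {M : Matrix (Fin D) (Fin D) ℝ}
    (h : RowMod D k M) : M.det = 1 := by
  have hM : M = updateRow (1 : Matrix (Fin D) (Fin D) ℝ) k
      (∑ c, M k c • (1 : Matrix (Fin D) (Fin D) ℝ) c) := by
    ext r c
    by_cases hr : r = k
    · subst hr
      rw [updateRow_self]
      simp [one_apply, Finset.sum_apply, mul_ite]
    · rw [updateRow_ne hr, h.2 r c hr]
  rw [hM, det_updateRow_sum, det_one, smul_eq_mul, mul_one, h.1]

lemma eq_of_det_eq' {D : ℕ} (A B : Matrix (Fin D) (Fin D) ℝ) (k : Fin D)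
    (h : ∀ r c, (r ≠ k ∨ c ≠ k) → A r c = B r c)
    (hdet : A.det = B.det)
    (hcof : (A.updateRow k (Pi.single k (1:ℝ))).det ≠ 0) : A = B := by
  have hB : B = A.updateRow k (A k + (B k k - A k k) • (Pi.single k (1:ℝ) : Fin D → ℝ)) := by
    ext r c
    by_cases hr : r = k
    · rw [hr, updateRow_self]
      by_cases hc : c = k
      · rw [hc]; simp [Pi.single_apply]
      · simp only [Pi.add_apply, Pi.smul_apply, Pi.single_apply, if_neg hc, smul_eq_mul,
          mul_zero, add_zero]
        exact (h k c (Or.inr hc)).symm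
    · rw [updateRow_ne hr]
      exact (h r c (Or.inl hr)).symm
  have hd2 := hdet
  rw [hB, det_updateRow_add, det_updateRow_smul, updateRow_eq_self] at hd2
  have hz : (B k k - A k k) * (A.updateRow k (Pi.single k (1:ℝ))).det = 0 := by
    linarith
  have hzz : B k k - A k k = 0 := by
    rcases mul_eq_zero.1 hz with h0 | h0
    · exact h0
    · exact absurd h0 hcof
  rw [hB, hzz, zero_smul, add_zero, updateRow_eq_self]

lemma updateRow_one_mul {D : ℕ} (k : Fin D) (v : Fin D → ℝ)
    (B : Matrix (Fin D) (Fin D) ℝ) (r s : Fin D) :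
    (updateRow (1 : Matrix (Fin D) (Fin D) ℝ) k v * B) r s =
      if r = k then ∑ j, v j * B j s else B r s := by
  by_cases hr : r = k
  · subst hr
    rw [mul_apply, if_pos rfl]
    simp [updateRow_self]
  · rw [if_neg hr, mul_apply]
    simp only [updateRow_ne hr]
    rw [← mul_apply, one_mul]

/-- Every element of L^{i,i+1} — a D×D matrix of determinant 1 differing from
the identity only in rows i and i+1 (0-based) — factors as
T^i_1 · T^{i+1}_1 · T^i_2 · T^{i+1}_2 with T^i_m ∈ L^i and T^{i+1}_m ∈ L^{i+1}. -/
theorem two_row_factorization' (D : ℕ) (i : ℕ) (hi : i + 1 < D)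
    (P : Matrix (Fin D) (Fin D) ℝ) (hdet : P.det = 1)
    (hrows : ∀ r c : Fin D, r.val ≠ i → r.val ≠ i + 1 →
      P r c = (1 : Matrix (Fin D) (Fin D) ℝ) r c) :
    ∃ T1 T2 U1 U2 : Matrix (Fin D) (Fin D) ℝ,
      RowMod D ⟨i, Nat.lt_of_succ_lt hi⟩ T1 ∧ RowMod D ⟨i + 1, hi⟩ U1 ∧
      RowMod D ⟨i, Nat.lt_of_succ_lt hi⟩ T2 ∧ RowMod D ⟨i + 1, hi⟩ U2 ∧
      P = T1 * U1 * T2 * U2 := by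
  set i' : Fin D := ⟨i, Nat.lt_of_succ_lt hi⟩ with hi'def
  set l' : Fin D := ⟨i + 1, hi⟩ with hl'def
  have hne : i' ≠ l' := by
    simp [hi'def, hl'def, Fin.ext_iff]
  have hne' : l' ≠ i' := hne.symm
  have hrows' : ∀ r c : Fin D, r ≠ i' → r ≠ l' →
      P r c = (1 : Matrix (Fin D) (Fin D) ℝ) r c := by
    intro r c h1 h2
    refine hrows r c ?_ ?_
    · intro hh; exact h1 (Fin.ext hh)
    · intro hh; exact h2 (Fin.ext hh)
  -- column l' cannot be entirely zero in rows i', l'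
  have hcol : ¬ (P i' l' = 0 ∧ P l' l' = 0) := by
    rintro ⟨h1, h2⟩
    have h0 : P.det = 0 := by
      apply det_eq_zero_of_column_eq_zero l'
      intro r
      by_cases hr1 : r = i'
      · subst hr1; exact h1
      by_cases hr2 : r = l'
      · subst hr2; exact h2
      · rw [hrows' r l' hr1 hr2, one_apply_ne hr2]
    rw [hdet] at h0; norm_num at h0
  set a : ℝ := if P l' l' = 0 then 0 else (1 - P i' l') / P l' l' with ha
  set x : ℝ := P i' l' + a * P l' l' with hxdef
  have hx : x ≠ 0 := by
    by_cases h0 : P l' l' = 0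
    · have h1 : P i' l' ≠ 0 := fun hh => hcol ⟨hh, h0⟩
      simp [hxdef, ha, h0, h1]
    · have hx1 : x = 1 := by
        rw [hxdef, ha, if_neg h0]
        field_simp
        ring
      rw [hx1]; norm_num
  set b : ℝ := (1 - P l' l') / x with hb
  set M : Matrix (Fin D) (Fin D) ℝ :=
    transvection l' i' b * (transvection i' l' a * P) with hM
  have hMrow : ∀ r c, r ≠ i' → r ≠ l' → M r c = (1 : Matrix (Fin D) (Fin D) ℝ) r c := by
    intro r c h1 h2
    rw [hM, transvection_mul_apply_of_ne _ _ _ _ h2, transvection_mul_apply_of_ne _ _ _ _ h1,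
      hrows' r c h1 h2]
  have hMi : ∀ c, M i' c = P i' c + a * P l' c := by
    intro c
    rw [hM, transvection_mul_apply_of_ne _ _ _ _ hne, transvection_mul_apply_same]
  have hMl : ∀ c, M l' c = P l' c + b * (P i' c + a * P l' c) := by
    intro c
    rw [hM, transvection_mul_apply_same, transvection_mul_apply_of_ne _ _ _ _ hne',
      transvection_mul_apply_same]
  have hMll : M l' l' = 1 := by
    rw [hMl l', ← hxdef, hb, div_mul_cancel₀ _ hx]; ring
  have hdetM : M.det = 1 := by
    rw [hM, det_mul, det_mul, det_transvection_of_ne _ _ hne' b,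
      det_transvection_of_ne _ _ hne a, hdet]; ring
  set t : Fin D → ℝ := fun c =>
    if c = i' then 1 else if c = l' then M i' l' else M i' c - M i' l' * M l' c with ht
  set T2 : Matrix (Fin D) (Fin D) ℝ := updateRow 1 i' t with hT2
  set U2 : Matrix (Fin D) (Fin D) ℝ := updateRow 1 l' (M l') with hU2
  have hT2mod : RowMod D i' T2 := by
    constructor
    · rw [hT2, updateRow_self, ht]; simp
    · intro r c hr; rw [hT2, updateRow_ne hr]
  have hU2mod : RowMod D l' U2 := by
    constructor
    · rw [hU2, updateRow_self]; exact hMll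
    · intro r c hr; rw [hU2, updateRow_ne hr]
  have hT2det : T2.det = 1 := rowMod_det hT2mod
  have hU2det : U2.det = 1 := rowMod_det hU2mod
  -- cofactor matrix is a RowMod at l'
  have hcofmod : RowMod D l' (M.updateRow i' (Pi.single i' (1:ℝ))) := by
    constructor
    · rw [updateRow_ne hne', hMll]
    · intro r c hr
      by_cases hri : r = i'
      · subst hri
        rw [updateRow_self]
        simp [Pi.single_apply, one_apply, eq_comm]
      · rw [updateRow_ne hri, hMrow r c hri hr]
  have hprod : M = T2 * U2 := by
    apply eq_of_det_eq' M (T2 * U2) i'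
    · intro r c hrc
      rw [hT2, hU2, updateRow_one_mul]
      by_cases hr : r = i'
      · subst hr
        rw [if_pos rfl]
        have hc : c ≠ i' := by
          rcases hrc with h | h
          · exact absurd rfl h
          · exact h
        have hsum : ∑ j, t j * updateRow (1 : Matrix (Fin D) (Fin D) ℝ) l' (M l') j c
            = t l' * M l' c + if c = l' then 0 else t c := by
          rw [← Finset.add_sum_erase _ _ (Finset.mem_univ l')]
          congr 1
          · rw [updateRow_self]
          · have hterm : ∀ j ∈ Finset.univ.erase l',
                t j * updateRow (1 : Matrix (Fin D) (Fin D) ℝ) l' (M l') j c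
                  = if j = c then t j else 0 := by
              intro j hj
              rw [updateRow_ne (Finset.ne_of_mem_erase hj), one_apply]
              split <;> ring
            rw [Finset.sum_congr rfl hterm, Finset.sum_ite_eq' (Finset.univ.erase l') c t]
            by_cases hcl : c = l'
            · simp [hcl]
            · simp [hcl, Finset.mem_erase]
        rw [hsum]
        have htl : t l' = M i' l' := by rw [ht]; simp [hne']
        by_cases hcl : c = l'
        · subst hcl
          rw [if_pos rfl, htl, hMll]; ring
        · have htc : t c = M i' c - M i' l' * M l' c := by rw [ht]; simp [hc, hcl]
          rw [if_neg hcl, htl, htc]; ring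
      · rw [if_neg hr]
        by_cases hrl : r = l'
        · subst hrl; rw [updateRow_self]
        · rw [updateRow_ne hrl, hMrow r c hr hrl]
    · rw [hdetM, det_mul, hT2det, hU2det]; norm_num
    · rw [rowMod_det hcofmod]; norm_num
  -- assemble
  have h1 : transvection l' i' (-b) * transvection l' i' b = (1 : Matrix (Fin D) (Fin D) ℝ) := by
    rw [transvection_mul_transvection_same (h := hne'), neg_add_cancel, transvection_zero]
  have h2 : transvection i' l' (-a) * transvection i' l' a = (1 : Matrix (Fin D) (Fin D) ℝ) := by
    rw [transvection_mul_transvection_same (h := hne), neg_add_cancel, transvection_zero]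
  have hPfact : P = transvection i' l' (-a) * transvection l' i' (-b) * M := by
    rw [hM, mul_assoc (transvection i' l' (-a)), ← mul_assoc (transvection l' i' (-b)), h1,
      one_mul, ← mul_assoc, h2, one_mul]
  have htv : ∀ (k m : Fin D) (c : ℝ), k ≠ m → RowMod D k (transvection k m c) := by
    intro k m c hkm
    constructor
    · show (1 + Matrix.single k m c) k k = 1
      rw [Matrix.add_apply, one_apply_eq, Matrix.single_apply_of_ne k m c k k (fun hh => hkm hh.2.symm), add_zero]
    · intro r c' hr
      show (1 + Matrix.single k m c) r c' = _
      rw [Matrix.add_apply, Matrix.single_apply_of_ne k m c r c' (fun hh => hr hh.1.symm), add_zero]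
  refine ⟨transvection i' l' (-a), T2, transvection l' i' (-b), U2,
    htv i' l' (-a) hne, htv l' i' (-b) hne', hT2mod, hU2mod, ?_⟩
  rw [mul_assoc, ← hprod]
  exact hPfact
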